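/- Let M be a finite matroid with ground set E. Then there exist integers n ≥ k ≥ 2 and a partition of E into pairwise disjoint sets E₁, E₂, E₃ with |E₁| = |E₂| = n and |E₃| = k such that the independent sets of M are exactly the subsets I of E with |I| ≤ n, I ≠ E₁, I ≠ E₂ and E₃ ⊄ I (that is, M is isomorphic to B_{n,k} for some n ≥ k ≥ 2) if and only if M has a non-spanning circuit C such that C is freely placed and coindependent, |C| ≥ 2, and there exist an integer m ≥ 2 and a partition of E \ C into disjoint sets C₁ and C₂ with |C₁| = |C₂| = m such that the independent sets of M \ C are exactly the subsets I of E \ C with |I| ≤ m, I ≠ C₁ and I ≠ C₂ (that is, M \ C is isomorphic to P_m). -/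

import Mathlib

open Set

namespace Matroid

variable {α β : Type*}

/-- A circuit of a matroid is a minimal dependent set. -/
def Circuit (M : Matroid α) (C : Set α) : Prop :=
  M.Dep C ∧ ∀ ⦃D : Set α⦄, M.Dep D → D ⊆ C → D = C

/-- The rank of a set `X` in a matroid `M` : the maximum cardinality of an
independent subset of `X`. -/
noncomputable def rkOn (M : Matroid α) (X : Set α) : ℕ :=
  sSup {n | ∃ I, M.Indep I ∧ I ⊆ X ∧ I.ncard = n}

/-- The rank of a matroid : the rank of its ground set. -/
noncomputable def rank (M : Matroid α) : ℕ := M.rkOn M.E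

/-- A hyperplane : a flat whose rank is one less than the rank of the matroid. -/
def Hyperplane (M : Matroid α) (H : Set α) : Prop :=
  M.IsFlat H ∧ M.rkOn H + 1 = M.rank

/-- Deletion of the set `D` from the matroid `M`. -/
def delete' (M : Matroid α) (D : Set α) : Matroid α := M.restrict (M.E \ D)

/-- Contraction of the set `C` in the matroid `M`. -/
def contract' (M : Matroid α) (C : Set α) : Matroid α := ((M✶).delete' C)✶

/-- A circuit `C` of `M` is freely placed if every circuit `C'` of `M` with `C' ≠ C`
and `C' ∩ C ≠ ∅` is spanning. -/
def FreelyPlaced (M : Matroid α) (C : Set α) : Prop :=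
  ∀ ⦃C' : Set α⦄, M.Circuit C' → C' ≠ C → (C' ∩ C).Nonempty → M.Spanning C'

/-- A coloop is an element belonging to every base. -/
def Coloop (M : Matroid α) (e : α) : Prop := ∀ ⦃B : Set α⦄, M.IsBase B → e ∈ B

/-- An element `e` is free in `M` if it is not a coloop and every circuit
containing `e` is spanning. -/
def FreeElem (M : Matroid α) (e : α) : Prop :=
  e ∈ M.E ∧ ¬ M.Coloop e ∧ ∀ ⦃C : Set α⦄, M.Circuit C → e ∈ C → M.Spanning C

/-- A loop is an element `e` such that `{e}` is a circuit. -/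
def IsLoop' (M : Matroid α) (e : α) : Prop := M.Circuit {e}

/-- Two non-loop elements of the ground set are parallel if they are equal or
form a two-element circuit. -/
def Parallel (M : Matroid α) (e f : α) : Prop :=
  e ∈ M.E ∧ f ∈ M.E ∧ ¬ M.IsLoop' e ∧ ¬ M.IsLoop' f ∧ (e = f ∨ M.Circuit {e, f})

/-- Two matroids are isomorphic if there is a bijection between their ground sets
mapping independent sets to independent sets. -/
def IsIso (M : Matroid α) (N : Matroid β) : Prop :=
  ∃ e : M.E ≃ N.E, ∀ I : Set M.E,
    M.Indep (Subtype.val '' I) ↔ N.Indep (Subtype.val '' (e '' I))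

/-- Every dependent set in a finite matroid contains a circuit. -/
lemma aux_exists_circuit (M : Matroid α) [M.Finite] :
    ∀ (n : ℕ) (X : Set α), X.ncard = n → M.Dep X → ∃ C, C ⊆ X ∧ M.Circuit C := by
  intro n
  induction n using Nat.strong_induction_on with
  | _ n ih =>
    intro X hn hX
    by_cases h : ∀ ⦃D : Set α⦄, M.Dep D → D ⊆ X → D = X
    · exact ⟨X, Subset.rfl, hX, h⟩
    · push_neg at h
      obtain ⟨D, hD, hDX, hne⟩ := h
      have hXfin : X.Finite := M.set_finite X hX.subset_ground
      have hlt : D.ncard < n := hn ▸ Set.ncard_lt_ncard (hDX.ssubset_of_ne hne) hXfin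
      obtain ⟨C, hCD, hC⟩ := ih _ hlt D rfl hD
      exact ⟨C, hCD.trans hDX, hC⟩

/-- Given two disjoint `m`-sets with `m ≥ 2`, there is an `m`-set inside their union
that differs from both. -/
lemma aux_J {A B : Set α} (hAB : Disjoint A B) (hA : A.Finite) (hB : B.Finite)
    {m : ℕ} (hm : 2 ≤ m) (hAc : A.ncard = m) (hBc : B.ncard = m) :
    ∃ J, J ⊆ A ∪ B ∧ J.ncard = m ∧ J ≠ A ∧ J ≠ B := by
  obtain ⟨a, ha⟩ : A.Nonempty := Set.nonempty_of_ncard_ne_zero (by omega)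
  obtain ⟨b, hb⟩ : B.Nonempty := Set.nonempty_of_ncard_ne_zero (by omega)
  obtain ⟨a', ha', haa'⟩ : ∃ x, x ∈ A ∧ x ≠ a :=
    Set.exists_ne_of_one_lt_ncard (by omega) a
  have hbA : b ∉ A \ {a} := fun h => (Set.disjoint_right.mp hAB hb) h.1
  refine ⟨insert b (A \ {a}), ?_, ?_, ?_, ?_⟩
  · exact Set.insert_subset (Or.inr hb) (Set.diff_subset.trans Set.subset_union_left)
  · have h1 : (A \ {a}).ncard = m - 1 := by
      rw [Set.ncard_diff_singleton_of_mem ha, hAc]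
    rw [Set.ncard_insert_of_notMem hbA (hA.diff (t := {a})), h1]
    omega
  · intro h
    exact (Set.disjoint_right.mp hAB hb) (h ▸ Set.mem_insert b _)
  · intro h
    have ha'J : a' ∈ insert b (A \ {a}) := Or.inr ⟨ha', haa'⟩
    exact (Set.disjoint_left.mp hAB ha') (h ▸ ha'J)

/-- An independent set whose cardinality equals the common cardinality of all
bases is itself a base. -/
lemma aux_base_of_indep_ncard {M : Matroid α} [M.Finite] {m : ℕ}
    (hbase : ∀ B, M.IsBase B → B.ncard = m) {I : Set α} (hI : M.Indep I)
    (hIc : I.ncard = m) : M.IsBase I := by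
  obtain ⟨B, hB, hIB⟩ := hI.exists_isBase_superset
  have hBI : I = B :=
    Set.eq_of_subset_of_ncard_le hIB (by rw [hbase B hB, hIc])
      (M.set_finite B hB.subset_ground)
  rw [hBI]; exact hB

/-- A finite matroid is a copy of `B_{n,k}` for some `n ≥ k ≥ 2` iff it has a freely
placed coindependent non-spanning circuit `C` with `|C| ≥ 2` whose deletion is a copy
of `P_m` for some `m ≥ 2`. -/
theorem bnk_iff (M : Matroid α) [M.Finite] :
    (∃ (n k : ℕ) (E₁ E₂ E₃ : Set α), 2 ≤ k ∧ k ≤ n ∧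
      Disjoint E₁ E₂ ∧ Disjoint E₁ E₃ ∧ Disjoint E₂ E₃ ∧ E₁ ∪ E₂ ∪ E₃ = M.E ∧
      E₁.ncard = n ∧ E₂.ncard = n ∧ E₃.ncard = k ∧
      (∀ I : Set α, M.Indep I ↔
        (I ⊆ M.E ∧ I.ncard ≤ n ∧ I ≠ E₁ ∧ I ≠ E₂ ∧ ¬ E₃ ⊆ I))) ↔
    (∃ C : Set α, M.Circuit C ∧ ¬ M.Spanning C ∧ M.FreelyPlaced C ∧ M.Coindep C ∧
      2 ≤ C.ncard ∧ ∃ (m : ℕ) (C₁ C₂ : Set α), 2 ≤ m ∧ Disjoint C₁ C₂ ∧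
        C₁ ∪ C₂ = M.E \ C ∧ C₁.ncard = m ∧ C₂.ncard = m ∧
        (∀ I : Set α, (M.delete' C).Indep I ↔
          (I ⊆ M.E \ C ∧ I.ncard ≤ m ∧ I ≠ C₁ ∧ I ≠ C₂))) := by
  have hEfin := M.ground_finite
  constructor
  · rintro ⟨n, k, E₁, E₂, E₃, hk2, hkn, h12, h13, h23, hunion, hc1, hc2, hc3, hind⟩
    have hE1E : E₁ ⊆ M.E := hunion ▸ (Set.subset_union_left.trans Set.subset_union_left)
    have hE2E : E₂ ⊆ M.E := hunion ▸ (Set.subset_union_right.trans Set.subset_union_left)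
    have hE3E : E₃ ⊆ M.E := hunion ▸ Set.subset_union_right
    have hE1fin : E₁.Finite := hEfin.subset hE1E
    have hE2fin : E₂.Finite := hEfin.subset hE2E
    have hE3fin : E₃.Finite := hEfin.subset hE3E
    have hE1ne : E₁.Nonempty := Set.nonempty_of_ncard_ne_zero (by omega)
    have hE2ne : E₂.Nonempty := Set.nonempty_of_ncard_ne_zero (by omega)
    have hE3ne : E₃.Nonempty := Set.nonempty_of_ncard_ne_zero (by omega)
    -- E₃ is dependent
    have hdep3 : M.Dep E₃ :=
      ⟨fun h => ((hind E₃).1 h).2.2.2.2 Subset.rfl, hE3E⟩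
    -- E₃ is a circuit
    have hcirc3 : M.Circuit E₃ := by
      refine ⟨hdep3, fun D hD hDE₃ => ?_⟩
      by_contra hne
      refine hD.not_indep ((hind D).2 ⟨hD.subset_ground, ?_, ?_, ?_, ?_⟩)
      · have := Set.ncard_le_ncard hDE₃ hE3fin
        omega
      · rintro rfl
        exact hE1ne.ne_empty (h13.eq_bot_of_le hDE₃)
      · rintro rfl
        exact hE2ne.ne_empty (h23.eq_bot_of_le hDE₃)
      · exact fun hsub => hne (subset_antisymm hDE₃ hsub)
    -- the exchange set J
    obtain ⟨J, hJsub, hJc, hJ1, hJ2⟩ := aux_J h12 hE1fin hE2fin (hk2.trans hkn) hc1 hc2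
    have hJcompl : J ⊆ M.E \ E₃ := by
      intro x hx
      rcases hJsub hx with h | h
      · exact ⟨hE1E h, fun h3 => Set.disjoint_left.mp h13 h h3⟩
      · exact ⟨hE2E h, fun h3 => Set.disjoint_left.mp h23 h h3⟩
    have hJE : J ⊆ M.E := hJcompl.trans Set.diff_subset
    have hJindep : M.Indep J := by
      refine (hind J).2 ⟨hJE, le_of_eq hJc, hJ1, hJ2, fun hsub => ?_⟩
      obtain ⟨c, hc⟩ := hE3ne
      exact (hJcompl (hsub hc)).2 hc
    -- all bases have cardinality n
    have hbase : ∀ B, M.IsBase B → B.ncard = n := by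
      intro B hB
      obtain ⟨B₁, hB₁, hJB₁⟩ := hJindep.exists_isBase_superset
      have h1 : B₁.ncard ≤ n := ((hind B₁).1 hB₁.indep).2.1
      have h2 : n ≤ B₁.ncard :=
        hJc ▸ Set.ncard_le_ncard hJB₁ (M.set_finite B₁ hB₁.subset_ground)
      rw [hB.ncard_eq_ncard_of_isBase hB₁]
      omega
    refine ⟨E₃, hcirc3, ?_, ?_, ?_, by omega, n, E₁, E₂, by omega, h12, ?_, hc1, hc2, ?_⟩
    -- not spanning
    · intro hsp
      obtain ⟨B, hB, hBE₃⟩ := (spanning_iff_exists_isBase_subset hE3E).1 hsp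
      have hBc := hbase B hB
      have : B = E₃ :=
        Set.eq_of_subset_of_ncard_le hBE₃ (by omega) hE3fin
      exact hdep3.not_indep (this ▸ hB.indep)
    -- freely placed
    · intro C' hC' hne hinter
      have hC'E := hC'.1.subset_ground
      have hcases : ¬(C' ⊆ M.E ∧ C'.ncard ≤ n ∧ C' ≠ E₁ ∧ C' ≠ E₂ ∧ ¬E₃ ⊆ C') :=
        fun h => hC'.1.not_indep ((hind C').2 h)
      by_cases h1 : C' = E₁
      · exfalso
        obtain ⟨x, hx⟩ := hinter
        exact Set.disjoint_left.mp h13 (h1 ▸ hx.1) hx.2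
      by_cases h2 : C' = E₂
      · exfalso
        obtain ⟨x, hx⟩ := hinter
        exact Set.disjoint_left.mp h23 (h2 ▸ hx.1) hx.2
      by_cases h3 : E₃ ⊆ C'
      · exact False.elim (hne (hC'.2 hdep3 h3).symm)
      have hlt : n < C'.ncard := by
        by_contra hle
        exact hcases ⟨hC'E, le_of_not_gt hle, h1, h2, h3⟩
      obtain ⟨I, hIC', hIc⟩ := Set.exists_subset_card_eq (le_of_lt hlt)
      have hIne : I ≠ C' := fun h => by rw [h] at hIc; omega
      have hIindep : M.Indep I := by
        by_contra hni
        exact hIne (hC'.2 ⟨hni, hIC'.trans hC'E⟩ hIC')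
      exact (spanning_iff_exists_isBase_subset hC'E).2
        ⟨I, aux_base_of_indep_ncard hbase hIindep hIc, hIC'⟩
    -- coindependent
    · exact (coindep_iff_exists hE3E).2
        ⟨J, aux_base_of_indep_ncard hbase hJindep hJc, hJcompl⟩
    -- ground set of the deletion
    · apply subset_antisymm
      · rintro x (hx | hx)
        · exact ⟨hE1E hx, fun h3 => Set.disjoint_left.mp h13 hx h3⟩
        · exact ⟨hE2E hx, fun h3 => Set.disjoint_left.mp h23 hx h3⟩
      · rintro x ⟨hxE, hx3⟩
        rw [← hunion] at hxE
        rcases hxE with (h | h) | h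
        · exact Or.inl h
        · exact Or.inr h
        · exact absurd h hx3
    -- independent sets of the deletion
    · intro I
      have hdel : (M.delete' E₃).Indep I ↔ M.Indep I ∧ I ⊆ M.E \ E₃ := by
        unfold Matroid.delete'; exact restrict_indep_iff
      rw [hdel, hind I]
      constructor
      · rintro ⟨⟨hIE, hIc, ha, hb, hx⟩, hsub⟩
        exact ⟨hsub, hIc, ha, hb⟩
      · rintro ⟨hsub, hIc, ha, hb⟩
        refine ⟨⟨hsub.trans Set.diff_subset, hIc, ha, hb, fun h3 => ?_⟩, hsub⟩
        obtain ⟨c, hc⟩ := hE3ne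
        exact (hsub (h3 hc)).2 hc
  · rintro ⟨C, hC, hnsp, hfp, hcoind, hC2, m, C₁, C₂, hm2, h12, hunion, hc1, hc2, hdel⟩
    have hCE : C ⊆ M.E := hC.1.subset_ground
    have hCfin : C.Finite := hEfin.subset hCE
    have hdel2 : ∀ I : Set α, (M.Indep I ∧ I ⊆ M.E \ C) ↔
        (I ⊆ M.E \ C ∧ I.ncard ≤ m ∧ I ≠ C₁ ∧ I ≠ C₂) := by
      intro I
      have hdel' : (M.delete' C).Indep I ↔ M.Indep I ∧ I ⊆ M.E \ C := by
        unfold Matroid.delete'; exact restrict_indep_iff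
      exact hdel'.symm.trans (hdel I)
    have hC1sub : C₁ ⊆ M.E \ C := hunion ▸ Set.subset_union_left
    have hC2sub : C₂ ⊆ M.E \ C := hunion ▸ Set.subset_union_right
    have hC1fin : C₁.Finite := hEfin.subset (hC1sub.trans Set.diff_subset)
    have hC2fin : C₂.Finite := hEfin.subset (hC2sub.trans Set.diff_subset)
    have hC1dep : ¬M.Indep C₁ :=
      fun h => ((hdel2 C₁).1 ⟨h, hC1sub⟩).2.2.1 rfl
    have hC2dep : ¬M.Indep C₂ :=
      fun h => ((hdel2 C₂).1 ⟨h, hC2sub⟩).2.2.2 rfl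
    obtain ⟨J, hJsub, hJc, hJ1, hJ2⟩ := aux_J h12 hC1fin hC2fin hm2 hc1 hc2
    have hJcompl : J ⊆ M.E \ C := hunion ▸ hJsub
    have hJindep : M.Indep J :=
      ((hdel2 J).2 ⟨hJcompl, le_of_eq hJc, hJ1, hJ2⟩).1
    obtain ⟨B₀, hB₀, hB₀sub⟩ := (coindep_iff_exists hCE).1 hcoind
    have hB₀le : B₀.ncard ≤ m := ((hdel2 B₀).1 ⟨hB₀.indep, hB₀sub⟩).2.1
    have hbase : ∀ B, M.IsBase B → B.ncard = m := by
      intro B hB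
      obtain ⟨B₁, hB₁, hJB₁⟩ := hJindep.exists_isBase_superset
      have h1 : m ≤ B₁.ncard :=
        hJc ▸ Set.ncard_le_ncard hJB₁ (M.set_finite B₁ hB₁.subset_ground)
      have h2 : B₁.ncard = B₀.ncard := hB₁.ncard_eq_ncard_of_isBase hB₀
      have h3 : B.ncard = B₁.ncard := hB.ncard_eq_ncard_of_isBase hB₁
      omega
    have hub : ∀ I, M.Indep I → I.ncard ≤ m := by
      intro I hI
      obtain ⟨B, hB, hIB⟩ := hI.exists_isBase_superset
      have := Set.ncard_le_ncard hIB (M.set_finite B hB.subset_ground)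
      rw [hbase B hB] at this
      exact this
    have hkm : C.ncard ≤ m := by
      obtain ⟨c, hc⟩ := hC.1.nonempty
      have hind' : M.Indep (C \ {c}) := by
        by_contra hni
        have heq : C \ {c} = C := hC.2 ⟨hni, Set.diff_subset.trans hCE⟩ Set.diff_subset
        rw [← heq] at hc
        exact hc.2 rfl
      have h1 : (C \ {c}).ncard ≤ m := hub _ hind'
      have h2 : (C \ {c}).ncard = C.ncard - 1 := Set.ncard_diff_singleton_of_mem hc
      have h3 : C.ncard ≠ 0 := by omega
      by_contra hgt
      have hCc : (C \ {c}).ncard = m := by omega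
      exact hnsp ((spanning_iff_exists_isBase_subset hCE).2
        ⟨_, aux_base_of_indep_ncard hbase hind' hCc, Set.diff_subset⟩)
    refine ⟨m, C.ncard, C₁, C₂, C, hC2, hkm, h12,
      disjoint_sdiff_left.mono_left hC1sub, disjoint_sdiff_left.mono_left hC2sub,
      by rw [hunion, Set.diff_union_of_subset hCE], hc1, hc2, rfl, ?_⟩
    intro I
    constructor
    · intro hI
      refine ⟨hI.subset_ground, hub I hI, ?_, ?_,
        fun hsub => hC.1.not_indep (hI.subset hsub)⟩
      · rintro rfl; exact hC1dep hI
      · rintro rfl; exact hC2dep hI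
    · rintro ⟨hIE, hIc, h1, h2, h3⟩
      by_contra hni
      obtain ⟨C', hC'sub, hC'⟩ := aux_exists_circuit M I.ncard I rfl ⟨hni, hIE⟩
      have hIfin : I.Finite := hEfin.subset hIE
      have hC'card : C'.ncard ≤ m := le_trans (Set.ncard_le_ncard hC'sub hIfin) hIc
      by_cases heq : C' = C
      · exact h3 (heq ▸ hC'sub)
      by_cases hint : (C' ∩ C).Nonempty
      · obtain ⟨B, hB, hBC'⟩ :=
          (spanning_iff_exists_isBase_subset hC'.1.subset_ground).1 (hfp hC' heq hint)
        have hBeq : B = C' :=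
          Set.eq_of_subset_of_ncard_le hBC' (by rw [hbase B hB]; exact hC'card)
            (hEfin.subset hC'.1.subset_ground)
        exact hC'.1.not_indep (hBeq ▸ hB.indep)
      · have hdisj : C' ⊆ M.E \ C :=
          fun x hx => ⟨hC'.1.subset_ground hx, fun hxC => hint ⟨x, hx, hxC⟩⟩
        have hnC12 : ¬(C' ⊆ M.E \ C ∧ C'.ncard ≤ m ∧ C' ≠ C₁ ∧ C' ≠ C₂) :=
          fun h => hC'.1.not_indep ((hdel2 C').2 h).1
        have hc12 : C' = C₁ ∨ C' = C₂ := by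
          by_contra hcc
          push_neg at hcc
          exact hnC12 ⟨hdisj, hC'card, hcc.1, hcc.2⟩
        rcases hc12 with rfl | rfl
        · exact h1 (Set.eq_of_subset_of_ncard_le hC'sub (by omega) hIfin).symm
        · exact h2 (Set.eq_of_subset_of_ncard_le hC'sub (by omega) hIfin).symm

end Matroid
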